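/- Let (Y, d_Y) be a compact geodesic metric space, M > 0, and d_ℓ the induced length metric on X_M = Y × (0, M] associated to the Balogh–Schramm distance ρ. Then for all p, q ∈ Y and 0 < s ≤ M: d_ℓ((p,s),(q,s)) ≤ 2·d_Y(p,q)/s. Moreover, if in addition s ≤ d_Y(p,q) ≤ M, then d_ℓ((p,s),(q,s)) ≤ 2·log(d_Y(p,q)/s) + 2. -/

import Mathlib

open Set

/-- The Balogh–Schramm distance on `Y × (0, ∞)`:
`ρ((p,s),(q,t)) = 2·log((d_Y(p,q) + max(s,t))/√(s·t))`. -/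
noncomputable def BS {Y : Type*} [MetricSpace Y] (x y : Y × ℝ) : ℝ :=
  2 * Real.log ((dist x.1 y.1 + max x.2 y.2) / Real.sqrt (x.2 * y.2))

/-- Length of the map `γ` over the set `S` with respect to the distance
function `d`: the supremum over finite monotone partitions in `S` of the sums
of consecutive distances (as in Mathlib's `eVariationOn`). -/
noncomputable def lengthOn {X : Type*} (d : X → X → ℝ) (γ : ℝ → X) (S : Set ℝ) : ENNReal :=
  ⨆ p : ℕ × { u : ℕ → ℝ // Monotone u ∧ ∀ i, u i ∈ S },
    ∑ i ∈ Finset.range p.1, ENNReal.ofReal (d (γ (p.2.1 i)) (γ (p.2.1 (i + 1))))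

/-- Membership in `X_M = Y × (0, M]`. -/
def inXM {Y : Type*} (M : ℝ) (x : Y × ℝ) : Prop := 0 < x.2 ∧ x.2 ≤ M

/-- The induced length metric on `X_M = Y × (0, M]`: the infimum of
Balogh–Schramm lengths of continuous paths joining `x` and `y` inside `X_M`. -/
noncomputable def dLen {Y : Type*} [MetricSpace Y] (M : ℝ) (x y : Y × ℝ) : ℝ :=
  (sInf {L : ENNReal | ∃ (a b : ℝ) (γ : ℝ → Y × ℝ), a ≤ b ∧
      ContinuousOn γ (Icc a b) ∧ γ a = x ∧ γ b = y ∧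
      (∀ t ∈ Icc a b, inXM M (γ t)) ∧
      lengthOn (BS (Y := Y)) γ (Icc a b) = L}).toReal

/-- A metric space is geodesic: any two points are joined by an isometric
embedding of `[0, dist p q]`. -/
def GeodesicSpace (Y : Type*) [MetricSpace Y] : Prop :=
  ∀ p q : Y, ∃ α : ℝ → Y, α 0 = p ∧ α (dist p q) = q ∧
    ∀ s ∈ Icc (0:ℝ) (dist p q), ∀ t ∈ Icc (0:ℝ) (dist p q), dist (α s) (α t) = |s - t|

/-- The Gromov product `(x,y)_ω` with respect to the length metric `dLen M`. -/
noncomputable def gromovProd {Y : Type*} [MetricSpace Y] (M : ℝ) (ω x y : Y × ℝ) : ℝ :=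
  (dLen M x ω + dLen M y ω - dLen M x y) / 2


/-! ### Auxiliary lemmas -/

lemma one_le_BSarg {d s t : ℝ} (hd : 0 ≤ d) (hs : 0 < s) (ht : 0 < t) :
    1 ≤ (d + max s t) / Real.sqrt (s * t) := by
  have hsq : Real.sqrt (s * t) ≤ max s t := by
    rw [show max s t = Real.sqrt ((max s t)^2) by
      rw [Real.sqrt_sq (le_max_of_le_left hs.le)]]
    apply Real.sqrt_le_sqrt
    rcases le_total s t with h | h
    · rw [max_eq_right h]; nlinarith
    · rw [max_eq_left h]; nlinarith
  have hpos : 0 < Real.sqrt (s * t) := Real.sqrt_pos.2 (by positivity)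
  rw [le_div_iff₀ hpos]
  linarith

lemma BS_tri_aux {s t u A B d : ℝ} (hs : 0 < s) (ht : 0 < t) (hu : 0 < u)
    (hA : 0 ≤ A) (hB : 0 ≤ B) (hdn : 0 ≤ d) (hd : d ≤ A + B) :
    2 * Real.log ((d + max s u) / Real.sqrt (s * u)) ≤
      2 * Real.log ((A + max s t) / Real.sqrt (s * t)) +
      2 * Real.log ((B + max t u) / Real.sqrt (t * u)) := by
  have key : (d + max s u) * t ≤ (A + max s t) * (B + max t u) := by
    have h1 : t ≤ max s t := le_max_right _ _
    have h2 : t ≤ max t u := le_max_left _ _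
    have h3 : max s u * t ≤ max s t * max t u := by
      rcases le_total s u with h | h
      · rw [max_eq_right h]
        nlinarith [le_max_right t u, le_max_right s t,
          mul_le_mul h1 (le_max_right t u) hu.le (le_trans ht.le h1)]
      · rw [max_eq_left h]
        nlinarith [mul_le_mul (le_max_left s t) h2 ht.le (le_trans hs.le (le_max_left s t))]
    nlinarith [mul_le_mul_of_nonneg_right hd ht.le,
      mul_le_mul_of_nonneg_left h2 hA, mul_le_mul_of_nonneg_left h1 hB, mul_nonneg hA hB]
  have hst : (0:ℝ) < Real.sqrt (s * t) := Real.sqrt_pos.2 (by positivity)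
  have htu : (0:ℝ) < Real.sqrt (t * u) := Real.sqrt_pos.2 (by positivity)
  have hsu : (0:ℝ) < Real.sqrt (s * u) := Real.sqrt_pos.2 (by positivity)
  have hA1 := one_le_BSarg hdn hs hu
  have hB1 := one_le_BSarg hA hs ht
  have hC1 := one_le_BSarg hB ht hu
  have hsqrt : Real.sqrt (s * t) * Real.sqrt (t * u) = Real.sqrt (s * u) * t := by
    rw [← Real.sqrt_mul (by positivity), show s * t * (t * u) = (s * u) * t^2 by ring,
      Real.sqrt_mul (by positivity), Real.sqrt_sq ht.le]
  have hmul : (d + max s u) / Real.sqrt (s * u) ≤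
      ((A + max s t) / Real.sqrt (s * t)) * ((B + max t u) / Real.sqrt (t * u)) := by
    rw [div_mul_div_comm, div_le_div_iff₀ hsu (by positivity)]
    calc (d + max s u) * (Real.sqrt (s * t) * Real.sqrt (t * u))
        = ((d + max s u) * t) * Real.sqrt (s * u) := by rw [hsqrt]; ring
      _ ≤ ((A + max s t) * (B + max t u)) * Real.sqrt (s * u) :=
          mul_le_mul_of_nonneg_right key hsu.le
  have hlog := Real.log_le_log (lt_of_lt_of_le one_pos hA1) hmul
  rw [Real.log_mul (by linarith) (by linarith)] at hlog
  linarith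

lemma BS_comm' {Y : Type*} [MetricSpace Y] (x y : Y × ℝ) : BS x y = BS y x := by
  simp [BS, dist_comm, max_comm, mul_comm]

lemma BS_self' {Y : Type*} [MetricSpace Y] (x : Y × ℝ) (hx : 0 < x.2) : BS x x = 0 := by
  simp [BS, Real.sqrt_mul_self hx.le, div_self hx.ne']

lemma BS_nonneg' {Y : Type*} [MetricSpace Y] (x y : Y × ℝ) (hx : 0 < x.2) (hy : 0 < y.2) :
    0 ≤ BS x y := by
  have := Real.log_nonneg (one_le_BSarg (dist_nonneg (x := x.1) (y := y.1)) hx hy)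
  unfold BS; linarith

lemma BS_triangle' {Y : Type*} [MetricSpace Y] (x y z : Y × ℝ)
    (hx : 0 < x.2) (hy : 0 < y.2) (hz : 0 < z.2) : BS x z ≤ BS x y + BS y z := by
  unfold BS
  exact BS_tri_aux hx hy hz dist_nonneg dist_nonneg dist_nonneg (dist_triangle x.1 y.1 z.1)

/-- `BS` between two points with the same base point. -/
lemma BS_vert {Y : Type*} [MetricSpace Y] (x : Y) {a b : ℝ} (ha : 0 < a) (hab : a ≤ b) :
    BS ((x, b) : Y × ℝ) (x, a) = Real.log b - Real.log a := by
  have hb : 0 < b := lt_of_lt_of_le ha hab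
  have hsq : (0:ℝ) < Real.sqrt (b * a) := Real.sqrt_pos.2 (by positivity)
  unfold BS
  simp only [dist_self, zero_add, max_eq_left hab]
  rw [Real.log_div hb.ne' hsq.ne', Real.log_sqrt (by positivity),
    Real.log_mul hb.ne' ha.ne']
  ring

/-- `BS` between two points at the same height. -/
lemma BS_horiz {Y : Type*} [MetricSpace Y] (x y : Y) {c : ℝ} (hc : 0 < c) :
    BS ((x, c) : Y × ℝ) (y, c) = 2 * Real.log ((dist x y + c) / c) := by
  unfold BS
  simp [Real.sqrt_mul_self hc.le]

lemma log_ratio_le {d c : ℝ} (hc : 0 < c) (hd : 0 ≤ d) :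
    Real.log ((d + c) / c) ≤ d / c := by
  have h1 := Real.log_le_sub_one_of_pos (show (0:ℝ) < (d + c) / c by positivity)
  have h2 : (d + c) / c - 1 = d / c := by field_simp; ring
  linarith

/-! ### The pseudo-emetric space structure -/

def XP (Y : Type*) := {x : Y × ℝ // 0 < x.2}

noncomputable instance XP.instPEMS {Y : Type*} [MetricSpace Y] : PseudoEMetricSpace (XP Y) where
  edist x y := ENNReal.ofReal (BS x.1 y.1)
  edist_self x := by simp [BS_self' x.1 x.2]
  edist_comm x y := by simp [BS_comm']
  edist_triangle x y z := by
    show ENNReal.ofReal (BS x.1 z.1) ≤ ENNReal.ofReal (BS x.1 y.1) + ENNReal.ofReal (BS y.1 z.1)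
    rw [← ENNReal.ofReal_add (BS_nonneg' _ _ x.2 y.2) (BS_nonneg' _ _ y.2 z.2)]
    exact ENNReal.ofReal_le_ofReal (BS_triangle' _ _ _ x.2 y.2 z.2)

lemma XP.edist_def {Y : Type*} [MetricSpace Y] (x y : XP Y) :
    edist x y = ENNReal.ofReal (BS x.1 y.1) := rfl

lemma lengthOn_eq_eVariationOn {Y : Type*} [MetricSpace Y] (γ : ℝ → Y × ℝ) (γ' : ℝ → XP Y)
    (S : Set ℝ) (h : ∀ t ∈ S, (γ' t).1 = γ t) :
    lengthOn (BS (Y := Y)) γ S = eVariationOn γ' S := by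
  unfold lengthOn eVariationOn
  apply iSup_congr
  rintro ⟨n, u, hu, hmem⟩
  refine Finset.sum_congr rfl fun i _ => ?_
  rw [XP.edist_def, h _ (hmem (i+1)), h _ (hmem i), BS_comm']

/-! ### Bounding the length of pieces -/

/-- A piece with a constant base point and monotone increasing height. -/
lemma vert_bound_mono {Y : Type*} [MetricSpace Y] (γ' : ℝ → XP Y) (x : Y) {a b : ℝ}
    (h : ℝ → ℝ) (hcoords : ∀ t ∈ Icc a b, (γ' t).1 = (x, h t))
    {lo hi : ℝ} (hlo : 0 < lo) (hrange : ∀ t ∈ Icc a b, lo ≤ h t ∧ h t ≤ hi)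
    (hmono : ∀ t₁ ∈ Icc a b, ∀ t₂ ∈ Icc a b, t₁ ≤ t₂ → h t₁ ≤ h t₂) :
    eVariationOn γ' (Icc a b) ≤ ENNReal.ofReal (Real.log hi - Real.log lo) := by
  apply iSup_le
  rintro ⟨n, u, hu, hmem⟩
  have hpos : ∀ i, 0 < h (u i) := fun i => lt_of_lt_of_le hlo (hrange _ (hmem i)).1
  have key : ∀ i, edist (γ' (u (i+1))) (γ' (u i)) =
      ENNReal.ofReal (Real.log (h (u (i+1))) - Real.log (h (u i))) := by
    intro i
    rw [XP.edist_def, hcoords _ (hmem (i+1)), hcoords _ (hmem i),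
      BS_vert x (hpos i) (hmono _ (hmem i) _ (hmem (i+1)) (hu (Nat.le_succ i)))]
  simp only [key]
  rw [← ENNReal.ofReal_sum_of_nonneg (fun i _ => by
    have := Real.log_le_log (hpos i) (hmono _ (hmem i) _ (hmem (i+1)) (hu (Nat.le_succ i)))
    linarith)]
  rw [Finset.sum_range_sub (fun i => Real.log (h (u i)))]
  apply ENNReal.ofReal_le_ofReal
  have h1 : h (u n) ≤ hi := (hrange _ (hmem n)).2
  have h2 : lo ≤ h (u 0) := (hrange _ (hmem 0)).1
  have := Real.log_le_log (hpos n) h1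
  have := Real.log_le_log hlo h2
  linarith

/-- A piece with a constant base point and monotone decreasing height. -/
lemma vert_bound_anti {Y : Type*} [MetricSpace Y] (γ' : ℝ → XP Y) (x : Y) {a b : ℝ}
    (h : ℝ → ℝ) (hcoords : ∀ t ∈ Icc a b, (γ' t).1 = (x, h t))
    {lo hi : ℝ} (hlo : 0 < lo) (hrange : ∀ t ∈ Icc a b, lo ≤ h t ∧ h t ≤ hi)
    (hanti : ∀ t₁ ∈ Icc a b, ∀ t₂ ∈ Icc a b, t₁ ≤ t₂ → h t₂ ≤ h t₁) :
    eVariationOn γ' (Icc a b) ≤ ENNReal.ofReal (Real.log hi - Real.log lo) := by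
  apply iSup_le
  rintro ⟨n, u, hu, hmem⟩
  have hpos : ∀ i, 0 < h (u i) := fun i => lt_of_lt_of_le hlo (hrange _ (hmem i)).1
  have key : ∀ i, edist (γ' (u (i+1))) (γ' (u i)) =
      ENNReal.ofReal (Real.log (h (u i)) - Real.log (h (u (i+1)))) := by
    intro i
    rw [XP.edist_def, hcoords _ (hmem (i+1)), hcoords _ (hmem i), BS_comm',
      BS_vert x (hpos (i+1)) (hanti _ (hmem i) _ (hmem (i+1)) (hu (Nat.le_succ i)))]
  simp only [key]
  rw [← ENNReal.ofReal_sum_of_nonneg (fun i _ => by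
    have := Real.log_le_log (hpos (i+1)) (hanti _ (hmem i) _ (hmem (i+1)) (hu (Nat.le_succ i)))
    linarith)]
  rw [Finset.sum_range_sub' (fun i => Real.log (h (u i)))]
  apply ENNReal.ofReal_le_ofReal
  have h1 : h (u 0) ≤ hi := (hrange _ (hmem 0)).2
  have h2 : lo ≤ h (u n) := (hrange _ (hmem n)).1
  have := Real.log_le_log (hpos 0) h1
  have := Real.log_le_log hlo h2
  linarith

/-- A piece at constant height `c` whose base point moves in a Lipschitz way. -/
lemma horiz_bound {Y : Type*} [MetricSpace Y] (γ' : ℝ → XP Y) {a b c K : ℝ}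
    (hab : a ≤ b) (hc : 0 < c) (hK : 0 ≤ K) (β : ℝ → Y)
    (hcoords : ∀ t ∈ Icc a b, (γ' t).1 = (β t, c))
    (hd : ∀ t₁ ∈ Icc a b, ∀ t₂ ∈ Icc a b, t₁ ≤ t₂ → dist (β t₁) (β t₂) ≤ K * (t₂ - t₁)) :
    eVariationOn γ' (Icc a b) ≤ ENNReal.ofReal (2 * K * (b - a) / c) := by
  apply iSup_le
  rintro ⟨n, u, hu, hmem⟩
  have key : ∀ i ∈ Finset.range n, edist (γ' (u (i+1))) (γ' (u i)) ≤
      ENNReal.ofReal (2 * K * (u (i+1) - u i) / c) := by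
    intro i _
    rw [XP.edist_def, hcoords _ (hmem (i+1)), hcoords _ (hmem i),
      BS_horiz _ _ hc]
    apply ENNReal.ofReal_le_ofReal
    have hdist : dist (β (u (i+1))) (β (u i)) ≤ K * (u (i+1) - u i) := by
      rw [dist_comm]
      exact hd _ (hmem i) _ (hmem (i+1)) (hu (Nat.le_succ i))
    have hlog := log_ratio_le hc (dist_nonneg (x := β (u (i+1))) (y := β (u i)))
    have hKd : dist (β (u (i+1))) (β (u i)) / c ≤ K * (u (i+1) - u i) / c := by
      gcongr
    calc 2 * Real.log ((dist (β (u (i+1))) (β (u i)) + c) / c)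
        ≤ 2 * (dist (β (u (i+1))) (β (u i)) / c) := by linarith
      _ ≤ 2 * (K * (u (i+1) - u i) / c) := by linarith
      _ = 2 * K * (u (i+1) - u i) / c := by ring
  calc ∑ i ∈ Finset.range n, edist (γ' (u (i+1))) (γ' (u i))
      ≤ ∑ i ∈ Finset.range n, ENNReal.ofReal (2 * K * (u (i+1) - u i) / c) :=
        Finset.sum_le_sum key
    _ = ENNReal.ofReal (∑ i ∈ Finset.range n, 2 * K * (u (i+1) - u i) / c) := by
        rw [ENNReal.ofReal_sum_of_nonneg]
        intro i _
        have h1 : u i ≤ u (i+1) := hu (Nat.le_succ i)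
        have h2 : 0 ≤ u (i+1) - u i := by linarith
        positivity
    _ ≤ ENNReal.ofReal (2 * K * (b - a) / c) := by
        apply ENNReal.ofReal_le_ofReal
        have hsum : ∑ i ∈ Finset.range n, 2 * K * (u (i+1) - u i) / c
            = 2 * K / c * (u n - u 0) := by
          have : ∀ i, 2 * K * (u (i+1) - u i) / c
              = (2 * K / c) * u (i+1) - (2 * K / c) * u i := fun i => by ring
          simp only [this]
          rw [Finset.sum_range_sub (fun i => (2 * K / c) * u i)]
          ring
        rw [hsum]
        have h1 : u n ≤ b := (hmem n).2
        have h2 : a ≤ u 0 := (hmem 0).1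
        have h3 : 0 ≤ 2 * K / c := by positivity
        calc 2 * K / c * (u n - u 0) ≤ 2 * K / c * (b - a) := by
              apply mul_le_mul_of_nonneg_left (by linarith) h3
          _ = 2 * K * (b - a) / c := by ring

lemma dLen_le {Y : Type*} [MetricSpace Y] {M : ℝ} {x y : Y × ℝ} {a b : ℝ} {γ : ℝ → Y × ℝ}
    (hab : a ≤ b) (hcont : ContinuousOn γ (Icc a b)) (hγa : γ a = x) (hγb : γ b = y)
    (hmem : ∀ t ∈ Icc a b, inXM M (γ t)) {C : ℝ} (hC : 0 ≤ C)
    (hlen : lengthOn (BS (Y := Y)) γ (Icc a b) ≤ ENNReal.ofReal C) : dLen M x y ≤ C := by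
  apply ENNReal.toReal_le_of_le_ofReal hC
  exact le_trans (sInf_le ⟨a, b, γ, hab, hcont, hγa, hγb, hmem, rfl⟩) hlen

theorem part1 {Y : Type*} [MetricSpace Y] (hgeo : GeodesicSpace Y)
    {M : ℝ} (hM : 0 < M) (p q : Y) {s : ℝ} (hs : 0 < s) (hsM : s ≤ M) :
    dLen M (p, s) (q, s) ≤ 2 * dist p q / s := by
  obtain ⟨α, hα0, hαD, hαiso⟩ := hgeo p q
  set D := dist p q with hD
  have hD0 : 0 ≤ D := dist_nonneg
  set γ : ℝ → Y × ℝ := fun t => (α t, s) with hγ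
  set γ' : ℝ → XP Y := fun t => ⟨(α t, s), hs⟩ with hγ'
  have hLip : LipschitzOnWith 1 α (Icc 0 D) := by
    rw [lipschitzOnWith_iff_dist_le_mul]
    intro a ha b hb
    rw [hαiso a ha b hb, NNReal.coe_one, one_mul, Real.dist_eq]
  refine dLen_le (γ := γ) hD0 ?_ ?_ ?_ ?_ (by positivity) ?_
  · exact hLip.continuousOn.prodMk continuousOn_const
  · simp [hγ, hα0]
  · simp [hγ, hαD]
  · intro t ht; exact ⟨hs, hsM⟩
  · rw [lengthOn_eq_eVariationOn γ γ' _ (fun t _ => rfl)]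
    have := horiz_bound γ' (a := 0) (b := D) (c := s) (K := 1) hD0 hs zero_le_one α
      (fun t _ => rfl)
      (fun t₁ h₁ t₂ h₂ h12 => by
        rw [hαiso t₁ h₁ t₂ h₂, abs_of_nonpos (by linarith), one_mul]; linarith)
    convert this using 2
    ring

noncomputable def bsPath {Y : Type*} [MetricSpace Y] (α : ℝ → Y) (s D : ℝ) : ℝ → Y × ℝ :=
  fun t => (α (D * min (max (t - 1) 0) 1), max (s + (min t 1 - max (t - 2) 0) * (D - s)) s)

theorem part2 {Y : Type*} [MetricSpace Y] (hgeo : GeodesicSpace Y)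
    {M : ℝ} (hM : 0 < M) (p q : Y) {s : ℝ} (hs : 0 < s) (hsM : s ≤ M)
    (hsD : s ≤ dist p q) (hDM : dist p q ≤ M) :
    dLen M (p, s) (q, s) ≤ 2 * Real.log (dist p q / s) + 2 := by
  obtain ⟨α, hα0, hαD, hαiso⟩ := hgeo p q
  set D := dist p q with hD
  have hD0 : 0 < D := lt_of_lt_of_le hs hsD
  have hDs : 0 ≤ D - s := by linarith
  set γ : ℝ → Y × ℝ := bsPath α s D with hγ
  have hγpos : ∀ t, 0 < (γ t).2 := fun t => lt_of_lt_of_le hs (le_max_right _ _)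
  set γ' : ℝ → XP Y := fun t => ⟨γ t, hγpos t⟩ with hγ'
  have hγ't : ∀ t, (γ' t).1 = γ t := fun t => rfl
  -- range facts
  have hβmem : ∀ t : ℝ, D * min (max (t - 1) 0) 1 ∈ Icc 0 D := by
    intro t
    have h1 : 0 ≤ min (max (t - 1) 0) 1 := le_min (le_max_right _ _) zero_le_one
    have h2 : min (max (t - 1) 0) 1 ≤ 1 := min_le_right _ _
    constructor
    · positivity
    · nlinarith
  have hc : ∀ t ∈ Icc (0:ℝ) 3, 0 ≤ min t 1 - max (t - 2) 0 ∧ min t 1 - max (t - 2) 0 ≤ 1 := by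
    intro t ht
    obtain ⟨ht0, ht3⟩ := ht
    rcases le_total t 1 with h | h <;> rcases le_total (t - 2) 0 with h2 | h2 <;>
      simp [min_eq_left, min_eq_right, max_eq_left, max_eq_right, h, h2] <;>
      first
        | (constructor <;> linarith)
        | linarith
  have hh : ∀ t ∈ Icc (0:ℝ) 3, s ≤ (γ t).2 ∧ (γ t).2 ≤ D := by
    intro t ht
    obtain ⟨hc1, hc2⟩ := hc t ht
    have hle : s ≤ s + (min t 1 - max (t - 2) 0) * (D - s) := by nlinarith
    have hle2 : s + (min t 1 - max (t - 2) 0) * (D - s) ≤ D := by nlinarith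
    constructor
    · exact le_max_of_le_left hle
    · show max (s + (min t 1 - max (t - 2) 0) * (D - s)) s ≤ D
      exact max_le hle2 hsD
  have hLip : LipschitzOnWith 1 α (Icc 0 D) := by
    rw [lipschitzOnWith_iff_dist_le_mul]
    intro a ha b hb
    rw [hαiso a ha b hb, NNReal.coe_one, one_mul, Real.dist_eq]
  -- coordinates on each piece
  have coord1 : ∀ t ∈ Icc (0:ℝ) 1, γ t = (p, s + t * (D - s)) := by
    intro t ht
    obtain ⟨ht0, ht1⟩ := ht
    show (α (D * min (max (t - 1) 0) 1), max (s + (min t 1 - max (t - 2) 0) * (D - s)) s) = _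
    rw [max_eq_right (by linarith : t - 1 ≤ (0:ℝ)), min_eq_left zero_le_one, mul_zero, hα0,
      min_eq_left ht1, max_eq_right (by linarith : t - 2 ≤ (0:ℝ)), sub_zero,
      max_eq_left (by nlinarith : s ≤ s + t * (D - s))]
  have coord2 : ∀ t ∈ Icc (1:ℝ) 2, γ t = (α (D * (t - 1)), D) := by
    intro t ht
    obtain ⟨ht1, ht2⟩ := ht
    show (α (D * min (max (t - 1) 0) 1), max (s + (min t 1 - max (t - 2) 0) * (D - s)) s) = _
    rw [max_eq_left (by linarith : (0:ℝ) ≤ t - 1), min_eq_left (by linarith : t - 1 ≤ (1:ℝ)),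
      min_eq_right ht1, max_eq_right (by linarith : t - 2 ≤ (0:ℝ)), sub_zero, one_mul,
      max_eq_left (by linarith : s ≤ s + (D - s))]
    congr 1
    ring
  have coord3 : ∀ t ∈ Icc (2:ℝ) 3, γ t = (q, s + (3 - t) * (D - s)) := by
    intro t ht
    obtain ⟨ht2, ht3⟩ := ht
    show (α (D * min (max (t - 1) 0) 1), max (s + (min t 1 - max (t - 2) 0) * (D - s)) s) = _
    rw [max_eq_left (by linarith : (0:ℝ) ≤ t - 1), min_eq_right (by linarith : (1:ℝ) ≤ t - 1),
      mul_one, hαD, min_eq_right (by linarith : (1:ℝ) ≤ t),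
      max_eq_left (by linarith : (0:ℝ) ≤ t - 2),
      max_eq_left (by nlinarith : s ≤ s + (1 - (t - 2)) * (D - s))]
    congr 2
    ring
  have hlogDs : 0 ≤ Real.log D - Real.log s := by
    have := Real.log_le_log hs hsD
    linarith
  refine dLen_le (γ := γ) (by norm_num : (0:ℝ) ≤ 3) ?_ ?_ ?_ ?_
    (by nlinarith [Real.log_nonneg ((one_le_div hs).2 hsD)]) ?_
  · -- continuity
    apply ContinuousOn.prodMk
    · apply hLip.continuousOn.comp
      · apply Continuous.continuousOn
        fun_prop
      · exact fun t _ => hβmem t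
    · apply Continuous.continuousOn
      fun_prop
  · rw [coord1 0 (by norm_num)]
    norm_num
  · rw [coord3 3 (by norm_num)]
    norm_num
  · intro t ht
    exact ⟨hγpos t, le_trans (hh t ht).2 hDM⟩
  · rw [lengthOn_eq_eVariationOn γ γ' _ (fun t _ => rfl)]
    have split1 := eVariationOn.Icc_add_Icc γ' (s := univ)
      (show (0:ℝ) ≤ 1 by norm_num) (show (1:ℝ) ≤ 2 by norm_num) (mem_univ 1)
    have split2 := eVariationOn.Icc_add_Icc γ' (s := univ)
      (show (0:ℝ) ≤ 2 by norm_num) (show (2:ℝ) ≤ 3 by norm_num) (mem_univ 2)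
    simp only [univ_inter] at split1 split2
    have b1 : eVariationOn γ' (Icc 0 1) ≤ ENNReal.ofReal (Real.log D - Real.log s) := by
      apply vert_bound_mono γ' p (fun t => s + t * (D - s)) ?_ hs ?_ ?_
      · intro t ht
        rw [hγ't, coord1 t ht]
      · intro t ht
        obtain ⟨ht0, ht1⟩ := ht
        constructor <;> beta_reduce <;> nlinarith
      · intro t₁ h₁ t₂ h₂ h12
        beta_reduce
        nlinarith
    have b3 : eVariationOn γ' (Icc 2 3) ≤ ENNReal.ofReal (Real.log D - Real.log s) := by
      apply vert_bound_anti γ' q (fun t => s + (3 - t) * (D - s)) ?_ hs ?_ ?_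
      · intro t ht
        rw [hγ't, coord3 t ht]
      · intro t ht
        obtain ⟨ht2, ht3⟩ := ht
        constructor <;> beta_reduce <;> nlinarith
      · intro t₁ h₁ t₂ h₂ h12
        beta_reduce
        nlinarith
    have b2 : eVariationOn γ' (Icc 1 2) ≤ ENNReal.ofReal 2 := by
      have := horiz_bound γ' (a := 1) (b := 2) (c := D) (K := D)
        (by norm_num) hD0 hD0.le (fun t => α (D * (t - 1)))
        (fun t ht => by rw [hγ't, coord2 t ht])
        (fun t₁ h₁ t₂ h₂ h12 => by
          have m1 : D * (t₁ - 1) ∈ Icc 0 D := by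
            constructor <;> nlinarith [h₁.1, h₁.2]
          have m2 : D * (t₂ - 1) ∈ Icc 0 D := by
            constructor <;> nlinarith [h₂.1, h₂.2]
          rw [hαiso _ m1 _ m2, abs_of_nonpos (by nlinarith)]
          nlinarith)
      convert this using 2
      field_simp
      norm_num
    calc eVariationOn γ' (Icc 0 3) = eVariationOn γ' (Icc 0 1) + eVariationOn γ' (Icc 1 2)
          + eVariationOn γ' (Icc 2 3) := by rw [split1, split2]
      _ ≤ ENNReal.ofReal (Real.log D - Real.log s) + ENNReal.ofReal 2
          + ENNReal.ofReal (Real.log D - Real.log s) := by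
          gcongr
      _ = ENNReal.ofReal (2 * Real.log (D / s) + 2) := by
          rw [← ENNReal.ofReal_add hlogDs (by norm_num), ← ENNReal.ofReal_add (by linarith) hlogDs]
          congr 1
          rw [Real.log_div hD0.ne' hs.ne']
          ring


/-- horizontal distance estimates for the induced length metric:
`dLen M (p,s) (q,s) ≤ 2·d_Y(p,q)/s`, and if moreover `s ≤ d_Y(p,q) ≤ M` then
`dLen M (p,s) (q,s) ≤ 2·log(d_Y(p,q)/s) + 2`. -/
theorem stmt16 {Y : Type*} [MetricSpace Y] [CompactSpace Y] (hgeo : GeodesicSpace Y)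
    {M : ℝ} (hM : 0 < M) (p q : Y) {s : ℝ} (hs : 0 < s) (hsM : s ≤ M) :
    dLen M (p, s) (q, s) ≤ 2 * dist p q / s ∧
      (s ≤ dist p q → dist p q ≤ M →
        dLen M (p, s) (q, s) ≤ 2 * Real.log (dist p q / s) + 2) :=
  ⟨part1 hgeo hM p q hs hsM, fun h1 h2 => part2 hgeo hM p q hs hsM h1 h2⟩
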